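/- If s ∈ ℂ satisfies Re(s) > 0, Q(s) = 0 and s ≠ γ̃_M, then Re(s) < γ̃_M. In particular every zero of Q in the right half-plane has real part at most γ̃_M. -/

import Mathlib

/-- `Q(s) = 1 - 2∑_{k≥1} exp(-s√(k(k+2))/2)`. -/
noncomputable def Qfun (s : ℂ) : ℂ :=
  1 - 2 * ∑' k : ℕ,
    Complex.exp (-(s * (Real.sqrt (((k : ℝ) + 1) * (((k : ℝ) + 1) + 2)) : ℂ) / 2))

private noncomputable def aSeq (k : ℕ) : ℝ := Real.sqrt (((k : ℝ) + 1) * (((k : ℝ) + 1) + 2))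

private lemma aSeq_pos (k : ℕ) : 0 < aSeq k := by
  unfold aSeq
  apply Real.sqrt_pos.mpr
  positivity

private lemma aSeq_ge (k : ℕ) : (k : ℝ) + 1 ≤ aSeq k := by
  have h : ((k : ℝ) + 1) ^ 2 ≤ ((k : ℝ) + 1) * (((k : ℝ) + 1) + 2) := by nlinarith [Nat.cast_nonneg (α := ℝ) k]
  have := Real.sqrt_le_sqrt h
  rwa [Real.sqrt_sq (by positivity)] at this

private lemma summable_aux {σ : ℝ} (hσ : 0 < σ) :
    Summable (fun k : ℕ => Real.exp (-(σ * aSeq k / 2))) := by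
  have hr0 : (0:ℝ) ≤ Real.exp (-(σ/2)) := (Real.exp_pos _).le
  have hr1 : Real.exp (-(σ/2)) < 1 := Real.exp_lt_one_iff.mpr (by linarith)
  have hg : Summable (fun k : ℕ => Real.exp (-(σ/2)) ^ (k+1)) := by
    simpa [pow_succ] using (summable_geometric_of_lt_one hr0 hr1).mul_right (Real.exp (-(σ/2)))
  refine Summable.of_nonneg_of_le (fun k => (Real.exp_pos _).le) (fun k => ?_) hg
  rw [← Real.exp_nat_mul]
  apply Real.exp_le_exp.mpr
  have := aSeq_ge k
  have : σ * ((k:ℝ)+1) ≤ σ * aSeq k := by nlinarith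
  push_cast
  nlinarith

/-- if `γ̃_M` is the unique positive real with
`∑_{k≥1} exp(-γ̃_M√(k(k+2))/2) = 1/2` and `s` is a zero of `Q` in the right half-plane
with `s ≠ γ̃_M`, then `Re(s) < γ̃_M`. In particular every zero of `Q` in the right
half-plane has real part at most `γ̃_M`. -/
theorem stmt_13 (γ : ℝ) (hγpos : 0 < γ)
    (hγ : ∑' k : ℕ,
        Real.exp (-(γ * Real.sqrt (((k : ℝ) + 1) * (((k : ℝ) + 1) + 2)) / 2)) = 1 / 2)
    (s : ℂ) (hs : 0 < s.re) (hQ : Qfun s = 0) (hne : s ≠ (γ : ℂ)) :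
    s.re < γ := by
  have hγ' : ∑' k : ℕ, Real.exp (-(γ * aSeq k / 2)) = 1 / 2 := hγ
  -- rewrite the complex terms
  have hz : ∀ a : ℝ, -(s * (a:ℂ)/2) = s * ((-(a/2) : ℝ) : ℂ) := by
    intro a; push_cast; ring
  have hzre : ∀ k : ℕ, (-(s * (aSeq k : ℂ)/2)).re = -(s.re * aSeq k / 2) := by
    intro k; rw [hz]; simp [Complex.mul_re]; ring
  have hzim : ∀ k : ℕ, (-(s * (aSeq k : ℂ)/2)).im = -(s.im * aSeq k / 2) := by
    intro k; rw [hz]; simp [Complex.mul_im]; ring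
  have hnorm : ∀ k : ℕ, ‖Complex.exp (-(s * (aSeq k : ℂ)/2))‖ = Real.exp (-(s.re * aSeq k / 2)) := by
    intro k; rw [Complex.norm_exp, hzre]
  have hsummC : Summable (fun k : ℕ => Complex.exp (-(s * (aSeq k : ℂ)/2))) := by
    apply Summable.of_norm
    simpa [hnorm] using summable_aux hs
  have hT : (∑' k : ℕ, Complex.exp (-(s * (aSeq k : ℂ)/2))) = 1/2 := by
    unfold Qfun at hQ
    have hQ' : 1 - 2 * ∑' k : ℕ, Complex.exp (-(s * (aSeq k : ℂ)/2)) = 0 := hQ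
    linear_combination (-1/2 : ℂ) * hQ'
  have hle : (1/2 : ℝ) ≤ ∑' k : ℕ, Real.exp (-(s.re * aSeq k / 2)) := by
    have h1 : ‖∑' k : ℕ, Complex.exp (-(s * (aSeq k : ℂ)/2))‖ = 1/2 := by
      rw [hT]; norm_num
    have h2 := norm_tsum_le_tsum_norm (f := fun k : ℕ => Complex.exp (-(s * (aSeq k : ℂ)/2)))
      (by simpa [hnorm] using summable_aux hs)
    rw [h1] at h2
    simpa [hnorm] using h2
  by_contra hcon
  push_neg at hcon
  rcases eq_or_lt_of_le hcon with heq | hlt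
  · -- s.re = γ, use the imaginary-part / equality analysis
    have hre0 : s.re = γ := heq.symm
    have him : s.im ≠ 0 := by
      intro h0
      exact hne (Complex.ext hre0 (by simp [h0]))
    -- real parts
    have hretsum : (1/2 : ℝ) = ∑' k : ℕ, (Complex.exp (-(s * (aSeq k : ℂ)/2))).re := by
      rw [← Complex.re_tsum hsummC, hT]; norm_num
    have hterm : ∀ k : ℕ, (Complex.exp (-(s * (aSeq k : ℂ)/2))).re
        = Real.exp (-(γ * aSeq k / 2)) * Real.cos (s.im * aSeq k / 2) := by
      intro k
      rw [Complex.exp_re, hzre, hzim, hre0, Real.cos_neg]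
    have hsummG : Summable (fun k : ℕ => Real.exp (-(γ * aSeq k / 2)) * Real.cos (s.im * aSeq k / 2)) := by
      have := (Complex.hasSum_re hsummC.hasSum).summable
      simpa [hterm] using this
    have hGsum : ∑' k : ℕ, Real.exp (-(γ * aSeq k / 2)) * Real.cos (s.im * aSeq k / 2) = 1/2 := by
      rw [← funext hterm, ← hretsum]
    have hcos : ∀ k : ℕ, Real.cos (s.im * aSeq k / 2) = 1 := by
      intro k
      by_contra hk
      have hck : Real.cos (s.im * aSeq k / 2) < 1 := lt_of_le_of_ne (Real.cos_le_one _) hk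
      have hstrict : ∑' k : ℕ, Real.exp (-(γ * aSeq k / 2)) * Real.cos (s.im * aSeq k / 2)
          < ∑' k : ℕ, Real.exp (-(γ * aSeq k / 2)) := by
        refine Summable.tsum_lt_tsum (i := k) (fun j => ?_) ?_ hsummG (summable_aux hγpos)
        · have := Real.cos_le_one (s.im * aSeq j / 2)
          nlinarith [Real.exp_pos (-(γ * aSeq j / 2))]
        · nlinarith [Real.exp_pos (-(γ * aSeq k / 2))]
      rw [hGsum, hγ'] at hstrict
      exact lt_irrefl _ hstrict
    -- extract integer conditions at k = 0 and k = 1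
    have ha0 : aSeq 0 = Real.sqrt 3 := by norm_num [aSeq]
    have ha1 : aSeq 1 = Real.sqrt 8 := by norm_num [aSeq]
    obtain ⟨m, hm⟩ := (Real.cos_eq_one_iff _).mp (hcos 0)
    obtain ⟨n, hn⟩ := (Real.cos_eq_one_iff _).mp (hcos 1)
    rw [ha0] at hm
    rw [ha1] at hn
    -- hm : m * (2π) = s.im * √3 / 2, hn : n * (2π) = s.im * √8 / 2
    have hpi := Real.pi_pos
    have hs3 : (0:ℝ) < Real.sqrt 3 := Real.sqrt_pos.mpr (by norm_num)
    have hs8 : (0:ℝ) < Real.sqrt 8 := Real.sqrt_pos.mpr (by norm_num)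
    have hmne : (m : ℝ) ≠ 0 := by
      intro h0
      rw [h0] at hm
      have : s.im * Real.sqrt 3 = 0 := by linarith
      rcases mul_eq_zero.mp this with h | h
      · exact him h
      · exact absurd h (ne_of_gt hs3)
    -- cross multiply: s.im * √3 * n = s.im * √8 * m  ⇒  √3 * n = √8 * m
    have hcross : Real.sqrt 3 * (n:ℝ) = Real.sqrt 8 * (m:ℝ) := by
      have e1 : s.im * Real.sqrt 3 = 4 * Real.pi * (m:ℝ) := by linarith
      have e2 : s.im * Real.sqrt 8 = 4 * Real.pi * (n:ℝ) := by linarith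
      have h1 : s.im * (Real.sqrt 3 * (n:ℝ)) = s.im * (Real.sqrt 8 * (m:ℝ)) := by
        calc s.im * (Real.sqrt 3 * (n:ℝ)) = (s.im * Real.sqrt 3) * n := by ring
          _ = (4 * Real.pi * (m:ℝ)) * n := by rw [e1]
          _ = (4 * Real.pi * (n:ℝ)) * m := by ring
          _ = (s.im * Real.sqrt 8) * m := by rw [e2]
          _ = s.im * (Real.sqrt 8 * (m:ℝ)) := by ring
      exact mul_left_cancel₀ him h1
    -- multiply by √3: 3 * n = 2√6 * m
    have h33 : Real.sqrt 3 * Real.sqrt 3 = 3 := Real.mul_self_sqrt (by norm_num)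
    have h38 : Real.sqrt 3 * Real.sqrt 8 = 2 * Real.sqrt 6 := by
      rw [← Real.sqrt_mul (by norm_num)]
      rw [show (3:ℝ) * 8 = 2^2 * 6 by norm_num, Real.sqrt_mul (by positivity),
        Real.sqrt_sq (by norm_num)]
    have hkey : (3:ℝ) * n = 2 * Real.sqrt 6 * m := by
      have := congrArg (fun x => Real.sqrt 3 * x) hcross
      calc (3:ℝ) * n = Real.sqrt 3 * Real.sqrt 3 * n := by rw [h33]
        _ = Real.sqrt 3 * (Real.sqrt 3 * n) := by ring
        _ = Real.sqrt 3 * (Real.sqrt 8 * m) := by rw [hcross]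
        _ = (Real.sqrt 3 * Real.sqrt 8) * m := by ring
        _ = 2 * Real.sqrt 6 * m := by rw [h38]
    have hirr : Irrational (Real.sqrt (6:ℕ)) :=
      irrational_sqrt_natCast_iff.mpr (by
        rintro ⟨r, hr⟩
        have h3 : r < 3 := by nlinarith
        interval_cases r <;> omega)
    apply hirr
    refine ⟨(3 * n) / (2 * m), ?_⟩
    have h2m : (2:ℝ) * m ≠ 0 := by
      intro h; exact hmne (by linarith [mul_eq_zero.mp h])
    push_cast
    rw [div_eq_iff h2m]
    linarith [hkey]
  · -- γ < s.re : strict decrease of the sum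
    have hstrict : ∑' k : ℕ, Real.exp (-(s.re * aSeq k / 2))
        < ∑' k : ℕ, Real.exp (-(γ * aSeq k / 2)) := by
      refine Summable.tsum_lt_tsum (i := 0) (fun j => ?_) ?_ (summable_aux hs) (summable_aux hγpos)
      · apply Real.exp_le_exp.mpr
        have := (aSeq_pos j).le
        nlinarith
      · apply Real.exp_lt_exp.mpr
        have := aSeq_pos 0
        nlinarith
    rw [hγ'] at hstrict
    linarith
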